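/- For any real symmetric B×B matrix Σ, there exists an orthogonal matrix R ∈ O(B) such that every diagonal entry of RΣRᵀ equals tr(Σ)/B. -/

import Mathlib

open Matrix BigOperators

namespace EqDiag
variable {n : ℕ}

lemma mem_orth_iff {A : Matrix (Fin n) (Fin n) ℝ} :
    A ∈ Matrix.orthogonalGroup (Fin n) ℝ ↔ A * Aᵀ = 1 := by
  rw [Matrix.mem_orthogonalGroup_iff]

lemma mem_orth_iff' {A : Matrix (Fin n) (Fin n) ℝ} :
    A ∈ Matrix.orthogonalGroup (Fin n) ℝ ↔ Aᵀ * A = 1 := by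
  rw [Matrix.mem_orthogonalGroup_iff']

lemma mul3_apply (P A Q : Matrix (Fin n) (Fin n) ℝ) (i j : Fin n) :
    (P * A * Q) i j = ∑ k, P i k * ∑ l, A k l * Q l j := by
  rw [mul_assoc, Matrix.mul_apply]
  simp_rw [Matrix.mul_apply]

lemma trace_conj (R A : Matrix (Fin n) (Fin n) ℝ) (h : Rᵀ * R = 1) :
    (R * A * Rᵀ).trace = A.trace := by
  rw [Matrix.trace_mul_cycle, h, one_mul]

lemma conj_isSymm (R A : Matrix (Fin n) (Fin n) ℝ) (hA : A.IsSymm) :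
    (R * A * Rᵀ).IsSymm := by
  unfold Matrix.IsSymm at *
  rw [Matrix.transpose_mul, Matrix.transpose_mul, Matrix.transpose_transpose, hA, mul_assoc]




/-- Extend an orthogonal matrix by a 1 in the top-left corner. -/
def ext1 (R : Matrix (Fin n) (Fin n) ℝ) : Matrix (Fin (n+1)) (Fin (n+1)) ℝ :=
  Matrix.of fun i j =>
    Fin.cases (Fin.cases 1 (fun _ => 0) j) (fun i' => Fin.cases 0 (fun j' => R i' j') j) i

@[simp] lemma ext1_zero_zero (R : Matrix (Fin n) (Fin n) ℝ) : ext1 R 0 0 = 1 := by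
  simp [ext1]

@[simp] lemma ext1_zero_succ (R : Matrix (Fin n) (Fin n) ℝ) (j : Fin n) :
    ext1 R 0 j.succ = 0 := by simp [ext1]

@[simp] lemma ext1_succ_zero (R : Matrix (Fin n) (Fin n) ℝ) (i : Fin n) :
    ext1 R i.succ 0 = 0 := by simp [ext1]

@[simp] lemma ext1_succ_succ (R : Matrix (Fin n) (Fin n) ℝ) (i j : Fin n) :
    ext1 R i.succ j.succ = R i j := by simp [ext1]

lemma ext1_mem (R : Matrix (Fin n) (Fin n) ℝ) (hR : R ∈ Matrix.orthogonalGroup (Fin n) ℝ) :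
    ext1 R ∈ Matrix.orthogonalGroup (Fin (n+1)) ℝ := by
  rw [mem_orth_iff] at *
  ext i j
  rw [Matrix.mul_apply]
  have key : ∀ a b, (∑ k, R a k * R b k) = (1 : Matrix (Fin n) (Fin n) ℝ) a b := by
    intro a b; rw [← hR, Matrix.mul_apply]; simp [Matrix.transpose_apply]
  induction i using Fin.cases with
  | zero =>
    induction j using Fin.cases with
    | zero => simp [Fin.sum_univ_succ, Matrix.one_apply]
    | succ j' => simp [Fin.sum_univ_succ, Matrix.one_apply, (Fin.succ_ne_zero j').symm]
  | succ i' =>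
    induction j using Fin.cases with
    | zero => simp [Fin.sum_univ_succ, Matrix.one_apply, Fin.succ_ne_zero i']
    | succ j' =>
      simp only [Fin.sum_univ_succ, Matrix.transpose_apply, ext1_succ_zero, ext1_succ_succ,
        zero_mul, mul_zero, zero_add]
      rw [key, Matrix.one_apply, Matrix.one_apply]
      simp [Fin.succ_inj]

lemma ext1_conj_zero (R : Matrix (Fin n) (Fin n) ℝ) (M : Matrix (Fin (n+1)) (Fin (n+1)) ℝ) :
    (ext1 R * M * (ext1 R)ᵀ) 0 0 = M 0 0 := by
  rw [mul3_apply]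
  simp [Fin.sum_univ_succ]

lemma ext1_conj_succ (R : Matrix (Fin n) (Fin n) ℝ) (M : Matrix (Fin (n+1)) (Fin (n+1)) ℝ)
    (i j : Fin n) :
    (ext1 R * M * (ext1 R)ᵀ) i.succ j.succ
      = (R * M.submatrix Fin.succ Fin.succ * Rᵀ) i j := by
  rw [mul3_apply, mul3_apply]
  simp [Fin.sum_univ_succ]



lemma one_eq_succ_zero : (1 : Fin (n+2)) = (0 : Fin (n+1)).succ := by
  simp [Fin.ext_iff]

/-- Givens rotation in the (0,1)-plane. -/
noncomputable def giv (n : ℕ) (θ : ℝ) : Matrix (Fin (n+2)) (Fin (n+2)) ℝ :=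
  Matrix.of fun i j =>
    Fin.cases
      (Fin.cases (Real.cos θ) (fun j' => Fin.cases (Real.sin θ) (fun _ => 0) j') j)
      (fun i' => Fin.cases
        (Fin.cases (-Real.sin θ) (fun j' => Fin.cases (Real.cos θ) (fun _ => 0) j') j)
        (fun i'' => if j = i''.succ.succ then 1 else 0) i') i

@[simp] lemma one_ne_ss (j : Fin n) : (1 : Fin (n+2)) ≠ j.succ.succ := by
  rw [one_eq_succ_zero, Ne, Fin.succ_inj]
  exact (Fin.succ_ne_zero j).symm

@[simp] lemma ss_ne_one (j : Fin n) : j.succ.succ ≠ (1 : Fin (n+2)) := (one_ne_ss j).symm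

@[simp] lemma giv_00 (θ : ℝ) : giv n θ 0 0 = Real.cos θ := by simp [giv]
@[simp] lemma giv_01 (θ : ℝ) : giv n θ 0 1 = Real.sin θ := by
  rw [one_eq_succ_zero]
  simp only [giv, Matrix.of_apply, Fin.cases_succ, Fin.cases_zero]
@[simp] lemma giv_0ss (θ : ℝ) (j : Fin n) : giv n θ 0 j.succ.succ = 0 := by simp [giv]
@[simp] lemma giv_10 (θ : ℝ) : giv n θ 1 0 = -Real.sin θ := by
  rw [one_eq_succ_zero]
  simp only [giv, Matrix.of_apply, Fin.cases_succ, Fin.cases_zero]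
@[simp] lemma giv_11 (θ : ℝ) : giv n θ 1 1 = Real.cos θ := by
  rw [one_eq_succ_zero]
  simp only [giv, Matrix.of_apply, Fin.cases_succ, Fin.cases_zero]
@[simp] lemma giv_1ss (θ : ℝ) (j : Fin n) : giv n θ 1 j.succ.succ = 0 := by
  rw [one_eq_succ_zero]
  simp only [giv, Matrix.of_apply, Fin.cases_succ, Fin.cases_zero]
@[simp] lemma giv_ss (θ : ℝ) (i : Fin n) (j : Fin (n+2)) :
    giv n θ i.succ.succ j = if j = i.succ.succ then 1 else 0 := by simp [giv]

lemma giv_mem (θ : ℝ) : giv n θ ∈ Matrix.orthogonalGroup (Fin (n+2)) ℝ := by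
  rw [mem_orth_iff]
  ext i j
  rw [Matrix.mul_apply]
  simp only [Matrix.transpose_apply]
  induction i using Fin.cases with
  | zero =>
    induction j using Fin.cases with
    | zero =>
      simp [Fin.sum_univ_succ, Matrix.one_apply]
      rw [← Real.cos_sq_add_sin_sq θ]; ring
    | succ j' =>
      induction j' using Fin.cases with
      | zero =>
        simp [Fin.sum_univ_succ, Matrix.one_apply, (Fin.succ_ne_zero _).symm,
          ← one_eq_succ_zero]
        ring
      | succ j'' =>
        simp [Fin.sum_univ_succ, Matrix.one_apply, (Fin.succ_ne_zero _).symm,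
          ← one_eq_succ_zero]
  | succ i' =>
    induction i' using Fin.cases with
    | zero =>
      induction j using Fin.cases with
      | zero =>
        simp [Fin.sum_univ_succ, Matrix.one_apply, Fin.succ_ne_zero, ← one_eq_succ_zero]
        ring
      | succ j' =>
        induction j' using Fin.cases with
        | zero =>
          simp [Fin.sum_univ_succ, Matrix.one_apply, ← one_eq_succ_zero]
          rw [← Real.cos_sq_add_sin_sq θ]; ring
        | succ j'' =>
          simp [Fin.sum_univ_succ, Matrix.one_apply, Fin.succ_ne_zero,
            (Fin.succ_ne_zero _).symm, Fin.succ_inj, ← one_eq_succ_zero]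
    | succ i'' =>
      induction j using Fin.cases with
      | zero =>
        simp [Fin.sum_univ_succ, Matrix.one_apply, Fin.succ_ne_zero,
          (Fin.succ_ne_zero _).symm, ← one_eq_succ_zero]
      | succ j' =>
        induction j' using Fin.cases with
        | zero =>
          simp [Fin.sum_univ_succ, Matrix.one_apply, Fin.succ_ne_zero,
            (Fin.succ_ne_zero _).symm, Fin.succ_inj, ← one_eq_succ_zero]
        | succ j'' =>
          simp [Fin.sum_univ_succ, Matrix.one_apply, Fin.succ_ne_zero,
            (Fin.succ_ne_zero _).symm, Fin.succ_inj, Finset.sum_ite_eq', eq_comm,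
            ← one_eq_succ_zero]

lemma giv_conj_00 (θ : ℝ) (A : Matrix (Fin (n+2)) (Fin (n+2)) ℝ) :
    (giv n θ * A * (giv n θ)ᵀ) 0 0
      = Real.cos θ * (A 0 0 * Real.cos θ + A 0 1 * Real.sin θ)
        + Real.sin θ * (A 1 0 * Real.cos θ + A 1 1 * Real.sin θ) := by
  rw [mul3_apply]
  simp [Fin.sum_univ_succ, ← one_eq_succ_zero]



/-- Permutation matrix. -/
def permMat (σ : Equiv.Perm (Fin n)) : Matrix (Fin n) (Fin n) ℝ :=
  Matrix.of fun i j => if σ i = j then 1 else 0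

lemma permMat_mem (σ : Equiv.Perm (Fin n)) :
    permMat σ ∈ Matrix.orthogonalGroup (Fin n) ℝ := by
  rw [mem_orth_iff]
  ext i j
  rw [Matrix.mul_apply]
  have hterm : ∀ k, permMat σ i k * (permMat σ)ᵀ k j
      = if σ i = k then (if σ j = k then (1:ℝ) else 0) else 0 := by
    intro k; simp only [permMat, Matrix.of_apply, Matrix.transpose_apply]
    split <;> simp
  simp_rw [hterm]
  rw [Finset.sum_ite_eq]
  simp [σ.injective.eq_iff, Matrix.one_apply, eq_comm]

lemma permMat_conj (σ : Equiv.Perm (Fin n)) (A : Matrix (Fin n) (Fin n) ℝ) (i j : Fin n) :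
    (permMat σ * A * (permMat σ)ᵀ) i j = A (σ i) (σ j) := by
  rw [mul3_apply]
  simp [permMat, mul_ite, ite_mul, Finset.sum_ite_eq, Finset.sum_ite_eq']

/-- IVT for the Givens diagonal entry. -/
lemma exists_theta (a b c d μ : ℝ) (hd : d ≤ μ) (ha : μ ≤ a) :
    ∃ θ : ℝ, Real.cos θ * (a * Real.cos θ + b * Real.sin θ)
      + Real.sin θ * (c * Real.cos θ + d * Real.sin θ) = μ := by
  set f : ℝ → ℝ := fun θ => Real.cos θ * (a * Real.cos θ + b * Real.sin θ)
      + Real.sin θ * (c * Real.cos θ + d * Real.sin θ) with hf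
  have hcont : ContinuousOn f (Set.Icc 0 (Real.pi / 2)) := by
    apply Continuous.continuousOn; fun_prop
  have h0 : f 0 = a := by simp [hf]
  have h1 : f (Real.pi / 2) = d := by simp [hf]
  have hle : (0:ℝ) ≤ Real.pi / 2 := by positivity
  have := intermediate_value_Icc' hle hcont
  rw [h0, h1] at this
  obtain ⟨θ, _, hθ⟩ := this ⟨hd, ha⟩
  exact ⟨θ, hθ⟩

lemma exists_pair (A : Matrix (Fin (n+2)) (Fin (n+2)) ℝ) :
    ∃ i j : Fin (n+2), i ≠ j ∧ A j j ≤ A.trace / (n+2 : ℕ) ∧ A.trace / (n+2 : ℕ) ≤ A i i := by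
  set μ : ℝ := A.trace / (n+2 : ℕ) with hμ
  have hcast : ((n+2 : ℕ) : ℝ) ≠ 0 := by positivity
  have htr : A.trace = ∑ i, A i i := rfl
  have hsum : ∑ i : Fin (n+2), A i i = (n+2 : ℕ) * μ := by
    rw [hμ, ← htr]; field_simp
  have hex1 : ∃ i, μ ≤ A i i := by
    by_contra h
    push_neg at h
    have : ∑ i : Fin (n+2), A i i < ∑ _i : Fin (n+2), μ :=
      Finset.sum_lt_sum_of_nonempty (by simp) (fun i _ => h i)
    rw [hsum] at this
    simp [Finset.card_fin] at this
  have hex2 : ∃ j, A j j ≤ μ := by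
    by_contra h
    push_neg at h
    have : ∑ _i : Fin (n+2), μ < ∑ i : Fin (n+2), A i i :=
      Finset.sum_lt_sum_of_nonempty (by simp) (fun i _ => h i)
    rw [hsum] at this
    simp [Finset.card_fin] at this
  obtain ⟨i, hi⟩ := hex1
  obtain ⟨j, hj⟩ := hex2
  by_cases hij : i = j
  · subst hij
    have heq : A i i = μ := le_antisymm hj hi
    have h01 : (0 : Fin (n+2)) ≠ 1 := by simp [Fin.ext_iff]
    obtain ⟨k, hk⟩ : ∃ k, k ≠ i := by
      by_cases h0 : i = 0
      · exact ⟨1, by simp [h0, h01.symm]⟩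
      · exact ⟨0, fun h => h0 h.symm⟩
    rcases le_total (A k k) μ with h | h
    · exact ⟨i, k, hk.symm, h, hi⟩
    · exact ⟨k, i, hk, hj, h⟩
  · exact ⟨i, j, hij, hj, hi⟩

lemma exists_sigma (i j : Fin (n+2)) (hij : i ≠ j) :
    ∃ σ : Equiv.Perm (Fin (n+2)), σ 0 = i ∧ σ 1 = j := by
  set s := Equiv.swap (0 : Fin (n+2)) i with hs
  set j' := s j with hj'
  have h01 : (0 : Fin (n+2)) ≠ 1 := by simp [Fin.ext_iff]
  have hj'0 : j' ≠ 0 := by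
    rw [hj', hs]
    intro h
    have h2 := congrArg s h
    rw [hs, Equiv.swap_apply_self, Equiv.swap_apply_left] at h2
    exact hij h2.symm
  refine ⟨(Equiv.swap 1 j').trans s, ?_, ?_⟩
  · simp [Equiv.swap_apply_of_ne_of_ne h01 (Ne.symm hj'0), hs]
  · simp [Equiv.swap_apply_left, hj', hs]



theorem aux : ∀ n (A : Matrix (Fin n) (Fin n) ℝ), A.IsSymm →
    ∃ R : Matrix (Fin n) (Fin n) ℝ, R ∈ Matrix.orthogonalGroup (Fin n) ℝ ∧
      ∀ b, (R * A * Rᵀ) b b = A.trace / (n : ℕ) := by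
  intro n
  induction n with
  | zero =>
    intro A _
    exact ⟨1, by rw [mem_orth_iff]; simp, fun b => b.elim0⟩
  | succ m ih =>
    match m, ih with
    | 0, _ =>
      intro A _
      refine ⟨1, by rw [mem_orth_iff]; simp, fun b => ?_⟩
      have hb : b = 0 := by
        have := b.isLt
        rw [Fin.ext_iff]
        simp
      subst hb
      simp [Matrix.trace, Matrix.diag, Fin.sum_univ_one]
    | (k+1 : ℕ), ih =>
      intro A hA
      set μ : ℝ := A.trace / ((k+2 : ℕ) : ℝ) with hμ
      obtain ⟨i, j, hij, hjle, hile⟩ := exists_pair A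
      obtain ⟨σ, hσ0, hσ1⟩ := exists_sigma i j hij
      set P := permMat σ with hP
      have hPmem := permMat_mem σ
      set A' := P * A * Pᵀ with hA'
      have hA'symm : A'.IsSymm := conj_isSymm P A hA
      have hA'tr : A'.trace = A.trace :=
        trace_conj P A (mem_orth_iff'.mp hPmem)
      have hA'00 : μ ≤ A' 0 0 := by rw [hA', permMat_conj, hσ0]; exact hile
      have hA'11 : A' 1 1 ≤ μ := by rw [hA', permMat_conj, hσ1]; exact hjle
      obtain ⟨θ, hθ⟩ := exists_theta (A' 0 0) (A' 0 1) (A' 1 0) (A' 1 1) μ hA'11 hA'00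
      set G := giv k θ with hG
      have hGmem := giv_mem (n := k) θ
      set M := G * A' * Gᵀ with hM
      have hM00 : M 0 0 = μ := by rw [hM, giv_conj_00]; exact hθ
      have hMsymm : M.IsSymm := conj_isSymm G A' hA'symm
      have hMtr : M.trace = A.trace := by
        rw [hM, trace_conj G A' (mem_orth_iff'.mp hGmem), hA'tr]
      set N := M.submatrix Fin.succ Fin.succ with hN
      have hNsymm : N.IsSymm := by
        unfold Matrix.IsSymm
        ext a b
        simp only [hN, Matrix.transpose_apply, Matrix.submatrix_apply]
        exact hMsymm.apply _ _
      have hNtr : N.trace = A.trace - μ := by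
        have := Matrix.trace_submatrix_succ M
        rw [← hN] at this
        rw [← this] at hMtr
        rw [hM00] at hMtr
        linarith
      obtain ⟨R', hR'mem, hR'diag⟩ := ih N hNsymm
      have hcast1 : ((k+1 : ℕ) : ℝ) ≠ 0 := by positivity
      have hcast2 : ((k+2 : ℕ) : ℝ) ≠ 0 := by positivity
      have hNμ : N.trace / ((k+1 : ℕ) : ℝ) = μ := by
        rw [hNtr, hμ]
        field_simp
        push_cast
        ring
      refine ⟨ext1 R' * G * P, ?_, ?_⟩
      · exact mul_mem (mul_mem (ext1_mem R' hR'mem) hGmem) hPmem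
      · intro b
        have hconj : ext1 R' * G * P * A * (ext1 R' * G * P)ᵀ = ext1 R' * M * (ext1 R')ᵀ := by
          rw [hM, hA']
          simp only [Matrix.transpose_mul]
          noncomm_ring
        rw [hconj]
        induction b using Fin.cases with
        | zero => rw [ext1_conj_zero, hM00]
        | succ b' =>
          rw [ext1_conj_succ, ← hN, hR'diag b', hNμ]

end EqDiag

/-- For any real symmetric `B×B` matrix `A` there is an orthogonal
`R` such that every diagonal entry of `RΣRᵀ` equals `tr(A)/B`. -/
theorem exists_orthogonal_equal_diagonal (B : ℕ) (hB : 0 < B)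
    (A : Matrix (Fin B) (Fin B) ℝ) (hA : A.IsSymm) :
    ∃ R : Matrix (Fin B) (Fin B) ℝ, R ∈ Matrix.orthogonalGroup (Fin B) ℝ ∧
      ∀ b, (R * A * Rᵀ) b b = A.trace / B := by
  exact EqDiag.aux B A hA
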